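/- arXiv:1603.06405 — 3 statements merged into one kernel-verified Lean document; each statement's English description precedes it below -/
import Mathlib

section
/- Let W1, W2 be k-dimensional subspaces of ℝ^m with dim(W1 ∩ W2) = k − 1, and let W3, W4 be k-dimensional subspaces with W3, W4 ∉ {W1, W2}. Then there exists g ∈ GL(m,ℝ) with {g(W1), g(W2)} = {W1, W2} and g(W3) = W4 if and only if the following three conditions hold: dim(W3 ∩ W1 ∩ W2) = dim(W4 ∩ W1 ∩ W2), dim(W3 ∩ (W1 + W2)) = dim(W4 ∩ (W1 + W2)), and max(dim(W3 ∩ W1), dim(W3 ∩ W2)) = max(dim(W4 ∩ W1), dim(W4 ∩ W2)). -/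
open Submodule Module Set

variable {V : Type*} [AddCommGroup V] [Module ℝ V] [FiniteDimensional ℝ V]

/-- relative complement -/
lemma aux_relCompl (N P : Submodule ℝ V) (h : N ≤ P) :
    ∃ C : Submodule ℝ V, C ≤ P ∧ N ⊓ C = ⊥ ∧ N ⊔ C = P := by
  obtain ⟨C', hC'⟩ := Submodule.exists_isCompl (N.comap P.subtype)
  have hmapN : (N.comap P.subtype).map P.subtype = N := by
    rw [Submodule.map_comap_eq, Submodule.range_subtype, inf_eq_right.2 h]
  refine ⟨C'.map P.subtype, Submodule.map_subtype_le _ _, ?_, ?_⟩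
  · rw [← hmapN, ← Submodule.map_inf _ P.injective_subtype, hC'.inf_eq_bot,
      Submodule.map_bot]
  · rw [← hmapN, ← Submodule.map_sup, hC'.sup_eq_top, Submodule.map_top,
      Submodule.range_subtype]

/-- a basis-type family of a subspace, as vectors of `V` -/
lemma aux_subBasis (P : Submodule ℝ V) (n : ℕ) (hn : finrank ℝ P = n) :
    ∃ v : Fin n → V, LinearIndependent ℝ v ∧ (∀ i, v i ∈ P) ∧
      span ℝ (Set.range v) = P := by
  subst hn
  set b := Module.finBasis ℝ ↥P
  refine ⟨fun i => (b i : V), ?_, fun i => (b i).2, ?_⟩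
  · exact b.linearIndependent.map' P.subtype (Submodule.ker_subtype P)
  · have : Set.range (fun i => ((b i : V))) = P.subtype '' (Set.range b) := by
      ext x; simp [Set.range_comp]
    rw [this, ← Submodule.map_span, b.span_eq, Submodule.map_top,
      Submodule.range_subtype]

/-- extend a subspace `N ≤ P` by an independent family to reach `P` -/
lemma aux_extend (N P : Submodule ℝ V) (h : N ≤ P) (n : ℕ)
    (hn : finrank ℝ N + n = finrank ℝ P) :
    ∃ c : Fin n → V, LinearIndependent ℝ c ∧ (∀ i, c i ∈ P) ∧
      Disjoint N (span ℝ (Set.range c)) ∧ N ⊔ span ℝ (Set.range c) = P := by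
  obtain ⟨C, hCP, hinf, hsup⟩ := aux_relCompl N P h
  have hdim : finrank ℝ C = n := by
    have := Submodule.finrank_sup_add_finrank_inf_eq N C
    rw [hinf, hsup] at this
    simp only [finrank_bot] at this
    omega
  obtain ⟨c, hli, hmem, hspan⟩ := aux_subBasis C n hdim
  exact ⟨c, hli, fun i => hCP (hmem i), by rw [hspan, disjoint_iff, hinf],
    by rw [hspan, hsup]⟩

lemma aux_sup_line (P : Submodule ℝ V) {x : V} (hx : x ∉ P) :
    finrank ℝ ↥(P ⊔ span ℝ {x}) = finrank ℝ P + 1 := by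
  have hx0 : x ≠ 0 := by rintro rfl; exact hx P.zero_mem
  have hd : P ⊓ span ℝ {x} = ⊥ :=
    (Submodule.disjoint_span_singleton.2 (fun h => absurd h hx)).eq_bot
  have := Submodule.finrank_sup_add_finrank_inf_eq P (span ℝ {x})
  rw [hd, finrank_bot, finrank_span_singleton hx0] at this
  omega

lemma aux_facts (k a d1 d2 b : ℕ) (W1 W2 W : Submodule ℝ V) (hk : 1 ≤ k)
    (hW1 : finrank ℝ W1 = k) (hW2 : finrank ℝ W2 = k) (hW : finrank ℝ W = k)
    (hU : finrank ℝ ↥(W1 ⊓ W2) = k - 1)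
    (hA : finrank ℝ ↥(W ⊓ (W1 ⊓ W2)) = a)
    (hd1 : finrank ℝ ↥(W ⊓ W1) = d1) (hd2 : finrank ℝ ↥(W ⊓ W2) = d2)
    (hb : finrank ℝ ↥(W ⊓ (W1 ⊔ W2)) = b) :
    a ≤ d1 ∧ d1 ≤ a + 1 ∧ a ≤ d2 ∧ d2 ≤ a + 1 ∧ d1 + d2 ≤ a + b ∧
      b ≤ d1 + 1 ∧ b ≤ d2 + 1 ∧ a ≤ k - 1 ∧ b ≤ k ∧
      finrank ℝ ↥(W1 ⊔ W2) = k + 1 := by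
  have hS : finrank ℝ ↥(W1 ⊔ W2) = k + 1 := by
    have := Submodule.finrank_sup_add_finrank_inf_eq W1 W2
    rw [hU, hW1, hW2] at this; omega
  have had1 : a ≤ d1 := by
    rw [← hA, ← hd1]
    exact Submodule.finrank_mono (inf_le_inf_left W inf_le_left)
  have had2 : a ≤ d2 := by
    rw [← hA, ← hd2]
    exact Submodule.finrank_mono (inf_le_inf_left W inf_le_right)
  have hd1a : d1 ≤ a + 1 := by
    have heq : (W ⊓ W1) ⊓ (W1 ⊓ W2) = W ⊓ (W1 ⊓ W2) := by
      ext x; simp; tauto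
    have hle : (W ⊓ W1) ⊔ (W1 ⊓ W2) ≤ W1 := sup_le inf_le_right inf_le_left
    have h1 : finrank ℝ ↥((W ⊓ W1) ⊔ (W1 ⊓ W2)) ≤ k := hW1 ▸ Submodule.finrank_mono hle
    have := Submodule.finrank_sup_add_finrank_inf_eq (W ⊓ W1) (W1 ⊓ W2)
    rw [heq, hA, hd1, hU] at this; omega
  have hd2a : d2 ≤ a + 1 := by
    have heq : (W ⊓ W2) ⊓ (W1 ⊓ W2) = W ⊓ (W1 ⊓ W2) := by
      ext x; simp; tauto
    have hle : (W ⊓ W2) ⊔ (W1 ⊓ W2) ≤ W2 := sup_le inf_le_right inf_le_right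
    have h1 : finrank ℝ ↥((W ⊓ W2) ⊔ (W1 ⊓ W2)) ≤ k := hW2 ▸ Submodule.finrank_mono hle
    have := Submodule.finrank_sup_add_finrank_inf_eq (W ⊓ W2) (W1 ⊓ W2)
    rw [heq, hA, hd2, hU] at this; omega
  have hsum : d1 + d2 ≤ a + b := by
    have heq : (W ⊓ W1) ⊓ (W ⊓ W2) = W ⊓ (W1 ⊓ W2) := by
      ext x; simp; tauto
    have hle : (W ⊓ W1) ⊔ (W ⊓ W2) ≤ W ⊓ (W1 ⊔ W2) :=
      sup_le (inf_le_inf_left W le_sup_left) (inf_le_inf_left W le_sup_right)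
    have h1 : finrank ℝ ↥((W ⊓ W1) ⊔ (W ⊓ W2)) ≤ b := hb ▸ Submodule.finrank_mono hle
    have := Submodule.finrank_sup_add_finrank_inf_eq (W ⊓ W1) (W ⊓ W2)
    rw [heq, hA, hd1, hd2] at this; omega
  have hbd1 : b ≤ d1 + 1 := by
    have heq : (W ⊓ (W1 ⊔ W2)) ⊓ W1 = W ⊓ W1 := by
      rw [inf_assoc, inf_eq_right.2 (le_sup_left : W1 ≤ W1 ⊔ W2)]
    have hle : (W ⊓ (W1 ⊔ W2)) ⊔ W1 ≤ W1 ⊔ W2 := sup_le inf_le_right le_sup_left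
    have h1 : finrank ℝ ↥((W ⊓ (W1 ⊔ W2)) ⊔ W1) ≤ k + 1 := hS ▸ Submodule.finrank_mono hle
    have := Submodule.finrank_sup_add_finrank_inf_eq (W ⊓ (W1 ⊔ W2)) W1
    rw [heq, hb, hd1, hW1] at this; omega
  have hbd2 : b ≤ d2 + 1 := by
    have heq : (W ⊓ (W1 ⊔ W2)) ⊓ W2 = W ⊓ W2 := by
      rw [inf_assoc, inf_eq_right.2 (le_sup_right : W2 ≤ W1 ⊔ W2)]
    have hle : (W ⊓ (W1 ⊔ W2)) ⊔ W2 ≤ W1 ⊔ W2 := sup_le inf_le_right le_sup_right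
    have h1 : finrank ℝ ↥((W ⊓ (W1 ⊔ W2)) ⊔ W2) ≤ k + 1 := hS ▸ Submodule.finrank_mono hle
    have := Submodule.finrank_sup_add_finrank_inf_eq (W ⊓ (W1 ⊔ W2)) W2
    rw [heq, hb, hd2, hW2] at this; omega
  have hak : a ≤ k - 1 := by
    rw [← hA, ← hU]; exact Submodule.finrank_mono inf_le_right
  have hbk : b ≤ k := by
    rw [← hb, ← hW]; exact Submodule.finrank_mono inf_le_left
  exact ⟨had1, hd1a, had2, hd2a, hsum, hbd1, hbd2, hak, hbk, hS⟩

lemma aux_x (k a d1 d2 b : ℕ) (W1 W2 W : Submodule ℝ V) (hk : 1 ≤ k)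
    (hW1 : finrank ℝ W1 = k) (hW2 : finrank ℝ W2 = k) (hW : finrank ℝ W = k)
    (hU : finrank ℝ ↥(W1 ⊓ W2) = k - 1)
    (hA : finrank ℝ ↥(W ⊓ (W1 ⊓ W2)) = a)
    (hd1 : finrank ℝ ↥(W ⊓ W1) = d1) (hd2 : finrank ℝ ↥(W ⊓ W2) = d2)
    (hb : finrank ℝ ↥(W ⊓ (W1 ⊔ W2)) = b) :
    ∃ x1 x2 : V, x1 ∈ W1 ∧ x1 ∉ W1 ⊓ W2 ∧ x2 ∈ W2 ∧ x2 ∉ W1 ⊓ W2 ∧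
      W ⊓ (W1 ⊔ W2) = ((W ⊓ (W1 ⊓ W2)) ⊔ span ℝ {if d1 = a + 1 then x1 else 0}
        ⊔ span ℝ {if d2 = a + 1 then x2 else 0}
        ⊔ span ℝ {if b = d1 + d2 + 1 - a then x1 + x2 else 0}) := by
  obtain ⟨f1, f2, f3, f4, f5, f6, f7, f8, f9, f10⟩ :=
    aux_facts k a d1 d2 b W1 W2 W hk hW1 hW2 hW hU hA hd1 hd2 hb
  have hAQ : W ⊓ (W1 ⊓ W2) ≤ W ⊓ (W1 ⊔ W2) :=
    inf_le_inf_left _ (le_trans inf_le_left le_sup_left)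
  have hAU : W ⊓ (W1 ⊓ W2) ≤ W1 ⊓ W2 := inf_le_right
  by_cases hδ : b = d1 + d2 + 1 - a
  · -- diagonal case : d1 = d2 = a, b = a + 1
    have hd1a : d1 = a := by omega
    have hd2a : d2 = a := by omega
    have hba : b = a + 1 := by omega
    have hQ1 : ¬ (W ⊓ (W1 ⊔ W2) ≤ W1) := by
      intro hle
      have h2 : W ⊓ (W1 ⊔ W2) ≤ W ⊓ W1 := le_inf inf_le_left hle
      have := Submodule.finrank_mono (t := W ⊓ W1) h2
      rw [hb, hd1] at this; omega
    have hQ2 : ¬ (W ⊓ (W1 ⊔ W2) ≤ W2) := by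
      intro hle
      have h2 : W ⊓ (W1 ⊔ W2) ≤ W ⊓ W2 := le_inf inf_le_left hle
      have := Submodule.finrank_mono (t := W ⊓ W2) h2
      rw [hb, hd2] at this; omega
    obtain ⟨u, huQ, hu1⟩ := SetLike.not_le_iff_exists.1 hQ1
    obtain ⟨v, hvQ, hv2⟩ := SetLike.not_le_iff_exists.1 hQ2
    have hdex : ∃ d, d ∈ W ⊓ (W1 ⊔ W2) ∧ d ∉ W1 ∧ d ∉ W2 := by
      by_cases hu2 : u ∈ W2
      · by_cases hv1 : v ∈ W1
        · refine ⟨u + v, add_mem huQ hvQ, fun h => hu1 ?_, fun h => hv2 ?_⟩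
          · have : u + v - v ∈ W1 := sub_mem h hv1
            simpa using this
          · have : u + v - u ∈ W2 := sub_mem h hu2
            simpa using this
        · exact ⟨v, hvQ, hv1, hv2⟩
      · exact ⟨u, huQ, hu1, hu2⟩
    obtain ⟨d, hdQ, hdn1, hdn2⟩ := hdex
    have hdS : d ∈ W1 ⊔ W2 := (Submodule.mem_inf.1 hdQ).2
    obtain ⟨x1, hx1, x2, hx2, hsum⟩ := Submodule.mem_sup.1 hdS
    refine ⟨x1, x2, hx1, ?_, hx2, ?_, ?_⟩
    · intro h
      exact hdn2 (hsum ▸ add_mem (Submodule.mem_inf.1 h).2 hx2)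
    · intro h
      exact hdn1 (hsum ▸ add_mem hx1 (Submodule.mem_inf.1 h).1)
    · rw [if_neg (by omega : ¬ d1 = a + 1), if_neg (by omega : ¬ d2 = a + 1),
        if_pos hδ]
      simp only [Submodule.span_zero_singleton, sup_bot_eq]
      rw [hsum]
      have hdA : d ∉ W ⊓ (W1 ⊓ W2) := by
        intro h
        exact hdn1 (Submodule.mem_inf.1 (Submodule.mem_inf.1 h).2).1
      refine (Submodule.eq_of_le_of_finrank_le ?_ ?_).symm
      · exact sup_le hAQ ((Submodule.span_singleton_le_iff_mem d _).2 hdQ)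
      · rw [hb, aux_sup_line _ hdA, hA]; omega
  · -- no diagonal
    have hx1ex : ∃ x1, x1 ∈ W1 ∧ x1 ∉ W1 ⊓ W2 ∧ (d1 = a + 1 → x1 ∈ W) := by
      by_cases h1 : d1 = a + 1
      · have hP1 : ¬ (W ⊓ W1 ≤ W1 ⊓ W2) := by
          intro hle
          have h2 : W ⊓ W1 ≤ W ⊓ (W1 ⊓ W2) := le_inf inf_le_left hle
          have := Submodule.finrank_mono (t := W ⊓ (W1 ⊓ W2)) h2
          rw [hd1, hA] at this; omega
        obtain ⟨x1, hx1, hn⟩ := SetLike.not_le_iff_exists.1 hP1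
        exact ⟨x1, (Submodule.mem_inf.1 hx1).2, hn, fun _ => (Submodule.mem_inf.1 hx1).1⟩
      · have hP1 : ¬ (W1 ≤ W1 ⊓ W2) := by
          intro hle
          have := Submodule.finrank_mono (t := W1 ⊓ W2) hle
          rw [hU, hW1] at this; omega
        obtain ⟨x1, hx1, hn⟩ := SetLike.not_le_iff_exists.1 hP1
        exact ⟨x1, hx1, hn, fun h => absurd h h1⟩
    have hx2ex : ∃ x2, x2 ∈ W2 ∧ x2 ∉ W1 ⊓ W2 ∧ (d2 = a + 1 → x2 ∈ W) := by
      by_cases h2 : d2 = a + 1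
      · have hP2 : ¬ (W ⊓ W2 ≤ W1 ⊓ W2) := by
          intro hle
          have h3 : W ⊓ W2 ≤ W ⊓ (W1 ⊓ W2) := le_inf inf_le_left hle
          have := Submodule.finrank_mono (t := W ⊓ (W1 ⊓ W2)) h3
          rw [hd2, hA] at this; omega
        obtain ⟨x2, hx2, hn⟩ := SetLike.not_le_iff_exists.1 hP2
        exact ⟨x2, (Submodule.mem_inf.1 hx2).2, hn, fun _ => (Submodule.mem_inf.1 hx2).1⟩
      · have hP2 : ¬ (W2 ≤ W1 ⊓ W2) := by
          intro hle
          have := Submodule.finrank_mono (t := W1 ⊓ W2) hle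
          rw [hU, hW2] at this; omega
        obtain ⟨x2, hx2, hn⟩ := SetLike.not_le_iff_exists.1 hP2
        exact ⟨x2, hx2, hn, fun h => absurd h h2⟩
    obtain ⟨x1, hx1W1, hx1U, hx1W⟩ := hx1ex
    obtain ⟨x2, hx2W2, hx2U, hx2W⟩ := hx2ex
    have hx1A : x1 ∉ W ⊓ (W1 ⊓ W2) := fun h => hx1U (Submodule.mem_inf.1 h).2
    have hx2nW1 : x2 ∉ W1 := fun h => hx2U (Submodule.mem_inf.2 ⟨h, hx2W2⟩)
    refine ⟨x1, x2, hx1W1, hx1U, hx2W2, hx2U, ?_⟩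
    rw [if_neg hδ]
    simp only [Submodule.span_zero_singleton, sup_bot_eq]
    by_cases h1 : d1 = a + 1 <;> by_cases h2 : d2 = a + 1
    · -- b = a + 2
      have hba : b = a + 2 := by omega
      rw [if_pos h1, if_pos h2]
      refine (Submodule.eq_of_le_of_finrank_le ?_ ?_).symm
      · refine sup_le (sup_le hAQ ?_) ?_
        · exact (Submodule.span_singleton_le_iff_mem _ _).2
            (Submodule.mem_inf.2 ⟨hx1W h1, le_sup_left (a := W1) hx1W1⟩)
        · exact (Submodule.span_singleton_le_iff_mem _ _).2
            (Submodule.mem_inf.2 ⟨hx2W h2, le_sup_right (b := W2) hx2W2⟩)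
      · have hx2nsup : x2 ∉ (W ⊓ (W1 ⊓ W2)) ⊔ span ℝ {x1} := by
          intro h
          have hle : (W ⊓ (W1 ⊓ W2)) ⊔ span ℝ {x1} ≤ W1 :=
            sup_le (le_trans hAU inf_le_left)
              ((Submodule.span_singleton_le_iff_mem _ _).2 hx1W1)
          exact hx2nW1 (hle h)
        rw [hb, aux_sup_line _ hx2nsup, aux_sup_line _ hx1A, hA]; omega
    · have hba : b = a + 1 := by omega
      rw [if_pos h1, if_neg h2]
      simp only [Submodule.span_zero_singleton, sup_bot_eq]
      refine (Submodule.eq_of_le_of_finrank_le ?_ ?_).symm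
      · exact sup_le hAQ ((Submodule.span_singleton_le_iff_mem _ _).2
          (Submodule.mem_inf.2 ⟨hx1W h1, le_sup_left (a := W1) hx1W1⟩))
      · rw [hb, aux_sup_line _ hx1A, hA]; omega
    · have hba : b = a + 1 := by omega
      rw [if_neg h1, if_pos h2]
      simp only [Submodule.span_zero_singleton, sup_bot_eq, bot_sup_eq]
      have hx2A : x2 ∉ W ⊓ (W1 ⊓ W2) := fun h => hx2U (Submodule.mem_inf.1 h).2
      refine (Submodule.eq_of_le_of_finrank_le ?_ ?_).symm
      · exact sup_le hAQ ((Submodule.span_singleton_le_iff_mem _ _).2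
          (Submodule.mem_inf.2 ⟨hx2W h2, le_sup_right (b := W2) hx2W2⟩))
      · rw [hb, aux_sup_line _ hx2A, hA]; omega
    · have hba : b = a := by omega
      rw [if_neg h1, if_neg h2]
      simp only [Submodule.span_zero_singleton, sup_bot_eq]
      refine (Submodule.eq_of_le_of_finrank_le hAQ ?_).symm
      rw [hb, hA]; omega

lemma aux_adapted (k a d1 d2 b : ℕ) (W1 W2 W : Submodule ℝ V) (hk : 1 ≤ k)
    (hW1 : finrank ℝ W1 = k) (hW2 : finrank ℝ W2 = k) (hW : finrank ℝ W = k)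
    (hU : finrank ℝ ↥(W1 ⊓ W2) = k - 1)
    (hA : finrank ℝ ↥(W ⊓ (W1 ⊓ W2)) = a)
    (hd1 : finrank ℝ ↥(W ⊓ W1) = d1) (hd2 : finrank ℝ ↥(W ⊓ W2) = d2)
    (hb : finrank ℝ ↥(W ⊓ (W1 ⊔ W2)) = b) :
    ∃ B : Basis (((((Fin a ⊕ Fin (k-1-a)) ⊕ Unit) ⊕ Unit) ⊕ Fin (k-b)) ⊕
        Fin (finrank ℝ V - (k+1) - (k-b))) ℝ V,
      W1 ⊓ W2 = span ℝ (Set.range fun i : Fin a ⊕ Fin (k-1-a) =>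
          B (.inl (.inl (.inl (.inl i))))) ∧
      W1 = (W1 ⊓ W2) ⊔ span ℝ {B (.inl (.inl (.inl (.inr ()))))} ∧
      W2 = (W1 ⊓ W2) ⊔ span ℝ {B (.inl (.inl (.inr ())))} ∧
      W = span ℝ (Set.range fun i : Fin a => B (.inl (.inl (.inl (.inl (.inl i))))))
        ⊔ span ℝ {if d1 = a + 1 then B (.inl (.inl (.inl (.inr ())))) else 0}
        ⊔ span ℝ {if d2 = a + 1 then B (.inl (.inl (.inr ()))) else 0}
        ⊔ span ℝ {if b = d1 + d2 + 1 - a then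
            B (.inl (.inl (.inl (.inr ())))) + B (.inl (.inl (.inr ()))) else 0}
        ⊔ span ℝ (Set.range fun i : Fin (k-b) => B (.inl (.inr i))) := by
  obtain ⟨f1, f2, f3, f4, f5, f6, f7, f8, f9, f10⟩ :=
    aux_facts k a d1 d2 b W1 W2 W hk hW1 hW2 hW hU hA hd1 hd2 hb
  obtain ⟨uA, liA, memA, spanA⟩ := aux_subBasis (W ⊓ (W1 ⊓ W2)) a hA
  obtain ⟨uA', liA', memA', disjA', supA'⟩ :=
    aux_extend (W ⊓ (W1 ⊓ W2)) (W1 ⊓ W2) inf_le_right (k-1-a)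
      (by rw [hA, hU]; omega)
  obtain ⟨x1, x2, hx1W1, hx1U, hx2W2, hx2U, hQspan⟩ :=
    aux_x k a d1 d2 b W1 W2 W hk hW1 hW2 hW hU hA hd1 hd2 hb
  obtain ⟨y, liy, memy, disjy, supy⟩ :=
    aux_extend (W ⊓ (W1 ⊔ W2)) W inf_le_left (k-b) (by rw [hb, hW]; omega)
  have hYW : span ℝ (Set.range y) ≤ W :=
    span_le.2 (Set.range_subset_iff.2 memy)
  have hfrY : finrank ℝ ↥(span ℝ (Set.range y)) = k - b := by
    rw [finrank_span_eq_card liy, Fintype.card_fin]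
  have hSYinf : (W1 ⊔ W2) ⊓ span ℝ (Set.range y) = ⊥ := by
    rw [← le_bot_iff]
    have h1 : (W1 ⊔ W2) ⊓ span ℝ (Set.range y) ≤
        (W ⊓ (W1 ⊔ W2)) ⊓ span ℝ (Set.range y) :=
      le_inf (le_inf (inf_le_right.trans hYW) inf_le_left) inf_le_right
    rw [disjoint_iff.1 disjy] at h1; exact h1
  have hfrSY : finrank ℝ ↥((W1 ⊔ W2) ⊔ span ℝ (Set.range y)) = (k+1) + (k-b) := by
    have := Submodule.finrank_sup_add_finrank_inf_eq (W1 ⊔ W2) (span ℝ (Set.range y))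
    rw [hSYinf, finrank_bot, f10, hfrY] at this; omega
  have hm : (k+1) + (k-b) ≤ finrank ℝ V := by
    rw [← hfrSY]; exact Submodule.finrank_le _
  obtain ⟨z, liz, memz, disjz, supz⟩ :=
    aux_extend ((W1 ⊔ W2) ⊔ span ℝ (Set.range y)) ⊤ le_top
      (finrank ℝ V - (k+1) - (k-b)) (by rw [hfrSY, finrank_top]; omega)
  set v := Sum.elim (Sum.elim (Sum.elim (Sum.elim (Sum.elim uA uA')
    (fun _ : Unit => x1)) (fun _ : Unit => x2)) y) z with hv
  -- cumulative spans and linear independence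
  have hspanU : span ℝ (Set.range (Sum.elim uA uA')) = W1 ⊓ W2 := by
    rw [Set.Sum.elim_range, Submodule.span_union, spanA, supA']
  have li01 : LinearIndependent ℝ (Sum.elim uA uA') :=
    liA.sum_type liA' (by rw [spanA]; exact disjA')
  have hx1ne : x1 ≠ 0 := fun h => hx1U (h ▸ Submodule.zero_mem _)
  have hW1eq : (W1 ⊓ W2) ⊔ span ℝ {x1} = W1 :=
    Submodule.eq_of_le_of_finrank_le
      (sup_le inf_le_left ((Submodule.span_singleton_le_iff_mem _ _).2 hx1W1))
      (by rw [hW1, aux_sup_line _ hx1U, hU]; omega)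
  have li1 : LinearIndependent ℝ
      (Sum.elim (Sum.elim uA uA') (fun _ : Unit => x1)) := by
    refine li01.sum_type (LinearIndependent.of_subsingleton () (by simpa using hx1ne)) ?_
    rw [hspanU, Set.range_const]
    exact Submodule.disjoint_span_singleton.2 (fun h => absurd h hx1U)
  have hspan1 : span ℝ (Set.range (Sum.elim (Sum.elim uA uA')
      (fun _ : Unit => x1))) = W1 := by
    rw [Set.Sum.elim_range, Submodule.span_union, hspanU, Set.range_const, hW1eq]
  have hx2nW1 : x2 ∉ W1 := fun h => hx2U (Submodule.mem_inf.2 ⟨h, hx2W2⟩)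
  have hx2ne : x2 ≠ 0 := fun h => hx2U (h ▸ Submodule.zero_mem _)
  have hSeq : W1 ⊔ span ℝ {x2} = W1 ⊔ W2 :=
    Submodule.eq_of_le_of_finrank_le
      (sup_le le_sup_left ((Submodule.span_singleton_le_iff_mem _ _).2
        (le_sup_right (b := W2) hx2W2)))
      (by rw [f10, aux_sup_line _ hx2nW1, hW1])
  have li2 : LinearIndependent ℝ (Sum.elim (Sum.elim (Sum.elim uA uA')
      (fun _ : Unit => x1)) (fun _ : Unit => x2)) := by
    refine li1.sum_type (LinearIndependent.of_subsingleton () (by simpa using hx2ne)) ?_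
    rw [hspan1, Set.range_const]
    exact Submodule.disjoint_span_singleton.2 (fun h => absurd h hx2nW1)
  have hspan2 : span ℝ (Set.range (Sum.elim (Sum.elim (Sum.elim uA uA')
      (fun _ : Unit => x1)) (fun _ : Unit => x2))) = W1 ⊔ W2 := by
    rw [Set.Sum.elim_range, Submodule.span_union, hspan1, Set.range_const, hSeq]
  have li3 : LinearIndependent ℝ (Sum.elim (Sum.elim (Sum.elim (Sum.elim uA uA')
      (fun _ : Unit => x1)) (fun _ : Unit => x2)) y) := by
    refine li2.sum_type liy ?_
    rw [hspan2]
    exact disjoint_iff.2 hSYinf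
  have hspan3 : span ℝ (Set.range (Sum.elim (Sum.elim (Sum.elim (Sum.elim uA uA')
      (fun _ : Unit => x1)) (fun _ : Unit => x2)) y)) =
      (W1 ⊔ W2) ⊔ span ℝ (Set.range y) := by
    rw [Set.Sum.elim_range, Submodule.span_union, hspan2]
  have li4 : LinearIndependent ℝ v := by
    refine li3.sum_type liz ?_
    rw [hspan3]; exact disjz
  have hspan4 : span ℝ (Set.range v) = ⊤ := by
    rw [hv, Set.Sum.elim_range, Submodule.span_union, hspan3, supz]
  haveI : Nonempty (((((Fin a ⊕ Fin (k-1-a)) ⊕ Unit) ⊕ Unit) ⊕ Fin (k-b)) ⊕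
      Fin (finrank ℝ V - (k+1) - (k-b))) := ⟨Sum.inl (Sum.inl (Sum.inl (Sum.inr ())))⟩
  have hcard : Fintype.card (((((Fin a ⊕ Fin (k-1-a)) ⊕ Unit) ⊕ Unit) ⊕ Fin (k-b)) ⊕
      Fin (finrank ℝ V - (k+1) - (k-b))) = finrank ℝ V := by
    simp only [Fintype.card_sum, Fintype.card_fin, Fintype.card_unit]
    omega
  refine ⟨basisOfLinearIndependentOfCardEqFinrank li4 hcard, ?_, ?_, ?_, ?_⟩ <;>
    rw [coe_basisOfLinearIndependentOfCardEqFinrank li4 hcard] <;>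
    simp only [Sum.elim_inl, Sum.elim_inr, hv]
  · exact hspanU.symm
  · exact hW1eq.symm
  · exact (Submodule.eq_of_le_of_finrank_le
      (sup_le inf_le_right ((Submodule.span_singleton_le_iff_mem _ _).2 hx2W2))
      (by rw [hW2, aux_sup_line _ hx2U, hU]; omega)).symm
  · rw [spanA, ← hQspan]
    exact supy.symm

lemma aux_key (k a d1 d2 b : ℕ) (W1 W2 W3 W4 : Submodule ℝ V) (hk : 1 ≤ k)
    (hW1 : finrank ℝ W1 = k) (hW2 : finrank ℝ W2 = k)
    (hW3 : finrank ℝ W3 = k) (hW4 : finrank ℝ W4 = k)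
    (hU : finrank ℝ ↥(W1 ⊓ W2) = k - 1)
    (hA3 : finrank ℝ ↥(W3 ⊓ (W1 ⊓ W2)) = a)
    (hd13 : finrank ℝ ↥(W3 ⊓ W1) = d1) (hd23 : finrank ℝ ↥(W3 ⊓ W2) = d2)
    (hb3 : finrank ℝ ↥(W3 ⊓ (W1 ⊔ W2)) = b)
    (hA4 : finrank ℝ ↥(W4 ⊓ (W1 ⊓ W2)) = a)
    (hd14 : finrank ℝ ↥(W4 ⊓ W1) = d1) (hd24 : finrank ℝ ↥(W4 ⊓ W2) = d2)
    (hb4 : finrank ℝ ↥(W4 ⊓ (W1 ⊔ W2)) = b) :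
    ∃ g : V ≃ₗ[ℝ] V, W1.map g.toLinearMap = W1 ∧ W2.map g.toLinearMap = W2 ∧ W3.map g.toLinearMap = W4 := by
  obtain ⟨B3, c31, c32, c33, c34⟩ :=
    aux_adapted k a d1 d2 b W1 W2 W3 hk hW1 hW2 hW3 hU hA3 hd13 hd23 hb3
  obtain ⟨B4, c41, c42, c43, c44⟩ :=
    aux_adapted k a d1 d2 b W1 W2 W4 hk hW1 hW2 hW4 hU hA4 hd14 hd24 hb4
  set g := B3.equiv B4 (Equiv.refl _) with hgdef
  have hg : ∀ i, g (B3 i) = B4 i := fun i => by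
    simp [hgdef, B3.equiv_apply]
  have hmapU : (W1 ⊓ W2).map g.toLinearMap = W1 ⊓ W2 := by
    conv_lhs => rw [c31]
    rw [Submodule.map_span, ← Set.range_comp]
    simp only [Function.comp_def, LinearEquiv.coe_coe, hg]
    exact c41.symm
  have hmap1 : W1.map g.toLinearMap = W1 := by
    conv_lhs => rw [c32]
    rw [Submodule.map_sup, hmapU, Submodule.map_span, Set.image_singleton, LinearEquiv.coe_coe, hg]
    exact c42.symm
  have hmap2 : W2.map g.toLinearMap = W2 := by
    conv_lhs => rw [c33]
    rw [Submodule.map_sup, hmapU, Submodule.map_span, Set.image_singleton, LinearEquiv.coe_coe, hg]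
    exact c43.symm
  refine ⟨g, hmap1, hmap2, ?_⟩
  conv_lhs => rw [c34]
  simp only [Submodule.map_sup, Submodule.map_span, Set.image_singleton,
    ← Set.range_comp, Function.comp_def, LinearEquiv.coe_coe, apply_ite ⇑g, map_zero, map_add, hg]
  exact c44.symm

lemma aux_swap (k : ℕ) (W1 W2 : Submodule ℝ V) (hk : 1 ≤ k)
    (hW1 : finrank ℝ W1 = k) (hW2 : finrank ℝ W2 = k)
    (hU : finrank ℝ ↥(W1 ⊓ W2) = k - 1) :
    ∃ σ : V ≃ₗ[ℝ] V, W1.map σ.toLinearMap = W2 ∧ W2.map σ.toLinearMap = W1 := by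
  have hA : finrank ℝ ↥(W1 ⊓ (W1 ⊓ W2)) = k - 1 := by
    rw [show W1 ⊓ (W1 ⊓ W2) = W1 ⊓ W2 from by rw [← inf_assoc, inf_idem]]
    exact hU
  have hd1 : finrank ℝ ↥(W1 ⊓ W1) = k := by rw [inf_idem]; exact hW1
  have hb : finrank ℝ ↥(W1 ⊓ (W1 ⊔ W2)) = k := by
    rw [inf_eq_left.2 (le_sup_left : W1 ≤ W1 ⊔ W2)]; exact hW1
  obtain ⟨B, c1, c2, c3, c4⟩ :=
    aux_adapted k (k-1) k (k-1) k W1 W2 W1 hk hW1 hW2 hW1 hU hA hd1 hU hb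
  set i1 : ((((Fin (k-1) ⊕ Fin (k-1-(k-1))) ⊕ Unit) ⊕ Unit) ⊕ Fin (k-k)) ⊕
      Fin (finrank ℝ V - (k+1) - (k-k)) := .inl (.inl (.inl (.inr ()))) with hi1
  set i2 : ((((Fin (k-1) ⊕ Fin (k-1-(k-1))) ⊕ Unit) ⊕ Unit) ⊕ Fin (k-k)) ⊕
      Fin (finrank ℝ V - (k+1) - (k-k)) := .inl (.inl (.inr ())) with hi2
  set σ := B.equiv B (Equiv.swap i1 i2) with hσdef
  have hσ : ∀ i, σ (B i) = B (Equiv.swap i1 i2 i) := fun i => by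
    simp [hσdef, B.equiv_apply]
  have hmapU : (W1 ⊓ W2).map σ.toLinearMap = W1 ⊓ W2 := by
    conv_lhs => rw [c1]
    rw [Submodule.map_span, ← Set.range_comp]
    have e : ∀ i : Fin (k-1) ⊕ Fin (k-1-(k-1)),
        σ (B (.inl (.inl (.inl (.inl i))))) = B (.inl (.inl (.inl (.inl i)))) := by
      intro i
      rw [hσ, Equiv.swap_apply_of_ne_of_ne (by simp [hi1]) (by simp [hi2])]
    simp only [Function.comp_def, LinearEquiv.coe_coe, e]
    exact c1.symm
  refine ⟨σ, ?_, ?_⟩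
  · conv_lhs => rw [c2]
    rw [Submodule.map_sup, hmapU, Submodule.map_span, Set.image_singleton,
      LinearEquiv.coe_coe, hσ, Equiv.swap_apply_left]
    exact c3.symm
  · conv_lhs => rw [c3]
    rw [Submodule.map_sup, hmapU, Submodule.map_span, Set.image_singleton,
      LinearEquiv.coe_coe, hσ, Equiv.swap_apply_right]
    exact c2.symm

lemma aux_frmap (g : V ≃ₗ[ℝ] V) (p : Submodule ℝ V) :
    finrank ℝ (p.map g.toLinearMap) = finrank ℝ p := by
  have h : p.map g.toLinearMap = p.map (↑g : V →ₗ[ℝ] V) := rfl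
  rw [h, LinearEquiv.finrank_map_eq]
theorem stmt11 (k m : ℕ)
    (W1 W2 W3 W4 : Submodule ℝ (Fin m → ℝ))
    (hW1 : Module.finrank ℝ W1 = k) (hW2 : Module.finrank ℝ W2 = k)
    (hW3 : Module.finrank ℝ W3 = k) (hW4 : Module.finrank ℝ W4 = k)
    (hint : Module.finrank ℝ ↥(W1 ⊓ W2) = k - 1)
    (h31 : W3 ≠ W1) (h32 : W3 ≠ W2) (h41 : W4 ≠ W1) (h42 : W4 ≠ W2) :
    (∃ g : (Fin m → ℝ) ≃ₗ[ℝ] (Fin m → ℝ),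
        ((W1.map g.toLinearMap = W1 ∧ W2.map g.toLinearMap = W2) ∨ (W1.map g.toLinearMap = W2 ∧ W2.map g.toLinearMap = W1)) ∧
        W3.map g.toLinearMap = W4)
      ↔ (Module.finrank ℝ ↥(W3 ⊓ W1 ⊓ W2) = Module.finrank ℝ ↥(W4 ⊓ W1 ⊓ W2) ∧
          Module.finrank ℝ ↥(W3 ⊓ (W1 ⊔ W2)) = Module.finrank ℝ ↥(W4 ⊓ (W1 ⊔ W2)) ∧
          max (Module.finrank ℝ ↥(W3 ⊓ W1)) (Module.finrank ℝ ↥(W3 ⊓ W2)) =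
            max (Module.finrank ℝ ↥(W4 ⊓ W1)) (Module.finrank ℝ ↥(W4 ⊓ W2))) := by
  rcases Nat.eq_zero_or_pos k with hk0 | hk
  · exfalso
    subst hk0
    have h1 : W1 = ⊥ := Submodule.finrank_eq_zero.1 hW1
    have h3 : W3 = ⊥ := Submodule.finrank_eq_zero.1 hW3
    exact h31 (h3.trans h1.symm)
  constructor
  · rintro ⟨g, hg12, hg3⟩
    have hinj : Function.Injective ⇑g := g.injective
    rcases hg12 with ⟨e1, e2⟩ | ⟨e1, e2⟩
    · refine ⟨?_, ?_, ?_⟩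
      · have h : W4 ⊓ W1 ⊓ W2 = (W3 ⊓ W1 ⊓ W2).map g.toLinearMap := by
          rw [Submodule.map_inf _ hinj, Submodule.map_inf _ hinj, hg3, e1, e2]
        rw [h, aux_frmap]
      · have h : W4 ⊓ (W1 ⊔ W2) = (W3 ⊓ (W1 ⊔ W2)).map g.toLinearMap := by
          rw [Submodule.map_inf _ hinj, Submodule.map_sup, hg3, e1, e2]
        rw [h, aux_frmap]
      · have h1 : W4 ⊓ W1 = (W3 ⊓ W1).map g.toLinearMap := by
          rw [Submodule.map_inf _ hinj, hg3, e1]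
        have h2 : W4 ⊓ W2 = (W3 ⊓ W2).map g.toLinearMap := by
          rw [Submodule.map_inf _ hinj, hg3, e2]
        rw [h1, h2, aux_frmap, aux_frmap]
    · refine ⟨?_, ?_, ?_⟩
      · have h : W4 ⊓ W1 ⊓ W2 = (W3 ⊓ W2 ⊓ W1).map g.toLinearMap := by
          rw [Submodule.map_inf _ hinj, Submodule.map_inf _ hinj, hg3, e1, e2]
        rw [h, aux_frmap, inf_right_comm]
      · have h : W4 ⊓ (W1 ⊔ W2) = (W3 ⊓ (W2 ⊔ W1)).map g.toLinearMap := by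
          rw [Submodule.map_inf _ hinj, Submodule.map_sup, hg3, e1, e2]
        rw [h, aux_frmap, sup_comm W2 W1]
      · have h1 : W4 ⊓ W1 = (W3 ⊓ W2).map g.toLinearMap := by
          rw [Submodule.map_inf _ hinj, hg3, e2]
        have h2 : W4 ⊓ W2 = (W3 ⊓ W1).map g.toLinearMap := by
          rw [Submodule.map_inf _ hinj, hg3, e1]
        rw [h1, h2, aux_frmap, aux_frmap,
          Nat.max_comm]
  · rintro ⟨h1, h2, h3⟩
    rw [inf_assoc, inf_assoc] at h1
    obtain ⟨g1, g2, g3, g4, g5, g6, g7, g8, g9, g10⟩ :=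
      aux_facts k _ _ _ _ W1 W2 W3 hk hW1 hW2 hW3 hint rfl rfl rfl rfl
    obtain ⟨j1, j2, j3, j4, j5, j6, j7, j8, j9, j10⟩ :=
      aux_facts k _ _ _ _ W1 W2 W4 hk hW1 hW2 hW4 hint rfl rfl rfl rfl
    rcases (by omega :
        (Module.finrank ℝ ↥(W3 ⊓ W1) = Module.finrank ℝ ↥(W4 ⊓ W1) ∧
         Module.finrank ℝ ↥(W3 ⊓ W2) = Module.finrank ℝ ↥(W4 ⊓ W2)) ∨
        (Module.finrank ℝ ↥(W3 ⊓ W1) = Module.finrank ℝ ↥(W4 ⊓ W2) ∧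
         Module.finrank ℝ ↥(W3 ⊓ W2) = Module.finrank ℝ ↥(W4 ⊓ W1))) with
      ⟨p, q⟩ | ⟨p, q⟩
    · obtain ⟨g, m1, m2, m3⟩ :=
        aux_key k _ _ _ _ W1 W2 W3 W4 hk hW1 hW2 hW3 hW4 hint
          rfl rfl rfl rfl h1.symm p.symm q.symm h2.symm
      exact ⟨g, Or.inl ⟨m1, m2⟩, m3⟩
    · obtain ⟨σ, s1, s2⟩ := aux_swap k W1 W2 hk hW1 hW2 hint
      have hinjσ : Function.Injective ⇑σ := σ.injective
      have i0 : Module.finrank ℝ (W3.map σ.toLinearMap) = k := by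
        rw [aux_frmap]; exact hW3
      have iA : Module.finrank ℝ ↥(W3.map σ.toLinearMap ⊓ (W1 ⊓ W2)) =
          Module.finrank ℝ ↥(W3 ⊓ (W1 ⊓ W2)) := by
        have h : W3.map σ.toLinearMap ⊓ (W1 ⊓ W2) = (W3 ⊓ (W2 ⊓ W1)).map σ.toLinearMap := by
          rw [Submodule.map_inf _ hinjσ, Submodule.map_inf _ hinjσ, s1, s2]
        rw [h, aux_frmap, inf_comm W2 W1]
      have id1 : Module.finrank ℝ ↥(W3.map σ.toLinearMap ⊓ W1) =
          Module.finrank ℝ ↥(W3 ⊓ W2) := by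
        have h : W3.map σ.toLinearMap ⊓ W1 = (W3 ⊓ W2).map σ.toLinearMap := by
          rw [Submodule.map_inf _ hinjσ, s2]
        rw [h, aux_frmap]
      have id2 : Module.finrank ℝ ↥(W3.map σ.toLinearMap ⊓ W2) =
          Module.finrank ℝ ↥(W3 ⊓ W1) := by
        have h : W3.map σ.toLinearMap ⊓ W2 = (W3 ⊓ W1).map σ.toLinearMap := by
          rw [Submodule.map_inf _ hinjσ, s1]
        rw [h, aux_frmap]
      have ib : Module.finrank ℝ ↥(W3.map σ.toLinearMap ⊓ (W1 ⊔ W2)) =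
          Module.finrank ℝ ↥(W3 ⊓ (W1 ⊔ W2)) := by
        have h : W3.map σ.toLinearMap ⊓ (W1 ⊔ W2) = (W3 ⊓ (W2 ⊔ W1)).map σ.toLinearMap := by
          rw [Submodule.map_inf _ hinjσ, Submodule.map_sup, s1, s2]
        rw [h, aux_frmap, sup_comm W2 W1]
      obtain ⟨h, m1, m2, m3⟩ :=
        aux_key k _ _ _ _ W1 W2 (W3.map σ.toLinearMap) W4 hk hW1 hW2 i0 hW4 hint
          iA id1 id2 ib h1.symm q.symm p.symm h2.symm
      have mtr : ∀ p : Submodule ℝ (Fin m → ℝ),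
          p.map (σ ≪≫ₗ h).toLinearMap = (p.map σ.toLinearMap).map h.toLinearMap := by
        intro p
        ext x
        simp only [Submodule.mem_map, LinearEquiv.trans_apply]
        constructor
        · rintro ⟨y, hy, rfl⟩; exact ⟨σ y, ⟨y, hy, rfl⟩, rfl⟩
        · rintro ⟨z, ⟨y, hy, rfl⟩, rfl⟩; exact ⟨y, hy, rfl⟩
      refine ⟨σ ≪≫ₗ h, Or.inr ⟨?_, ?_⟩, ?_⟩
      · rw [mtr, s1]; exact m2
      · rw [mtr, s2]; exact m1
      · rw [mtr]; exact m3
end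

section
/- Let W1, W2 be k-dimensional subspaces of ℝ^m (with 1 ≤ k and k+1 ≤ m, standard basis e_1,…,e_m). Then there exists g ∈ GL(m,ℝ) with g(W1) = span(e_1,…,e_k) and g(W2) = span(e_1,…,e_{k−1}, e_{k+1}) if and only if dim(W1 ∩ W2) = k − 1. -/
/-- The span of the standard basis vectors `e_i` for `i ∈ S`. -/
def stdSpan (m : ℕ) (S : Set (Fin m)) : Submodule ℝ (Fin m → ℝ) :=
  Submodule.span ℝ ((fun i => (Pi.single i 1 : Fin m → ℝ)) '' S)

lemma stdSpan_eq (m : ℕ) (S : Set (Fin m)) :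
    stdSpan m S = Submodule.span ℝ ((Pi.basisFun ℝ (Fin m)) '' S) := by
  simp [stdSpan]

lemma mem_stdSpan (m : ℕ) (S : Set (Fin m)) (x : Fin m → ℝ) :
    x ∈ stdSpan m S ↔ ∀ i ∉ S, x i = 0 := by
  rw [stdSpan_eq, Module.Basis.mem_span_image]
  constructor
  · intro h i hi
    by_contra hx
    exact hi (h (by simpa using hx))
  · intro h i hi
    simp only [Finset.mem_coe, Finsupp.mem_support_iff, Pi.basisFun_repr] at hi
    by_contra hiS
    exact hi (h i hiS)

lemma finrank_stdSpan (m n : ℕ) (h : n ≤ m) :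
    Module.finrank ℝ (stdSpan m {i : Fin m | (i : ℕ) < n}) = n := by
  classical
  have heq : ((fun i => (Pi.single i 1 : Fin m → ℝ)) '' {i : Fin m | (i : ℕ) < n}) =
      Set.range (fun j : Fin n => (Pi.single (Fin.castLE h j) 1 : Fin m → ℝ)) := by
    ext x
    constructor
    · rintro ⟨i, hi, rfl⟩
      exact ⟨⟨i, hi⟩, rfl⟩
    · rintro ⟨j, rfl⟩
      exact ⟨Fin.castLE h j, j.2, rfl⟩
  have hli : LinearIndependent ℝ (fun j : Fin n => (Pi.single (Fin.castLE h j) 1 : Fin m → ℝ)) := by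
    have := (Pi.basisFun ℝ (Fin m)).linearIndependent.comp (Fin.castLE h)
      (Fin.castLE_injective h)
    convert this using 2 with j
    simp [Function.comp]
  rw [stdSpan, heq, finrank_span_eq_card hli, Fintype.card_fin]
theorem stmt13 (k m : ℕ) (hk : 1 ≤ k) (hkm : k + 1 ≤ m)
    (W1 W2 : Submodule ℝ (Fin m → ℝ))
    (hW1 : Module.finrank ℝ W1 = k) (hW2 : Module.finrank ℝ W2 = k) :
    (∃ g : (Fin m → ℝ) ≃ₗ[ℝ] (Fin m → ℝ),
        -- `g(W1) = span(e_1, …, e_k)`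
        W1.map g.toLinearMap = stdSpan m {i : Fin m | (i : ℕ) < k} ∧
        -- `g(W2) = span(e_1, …, e_{k-1}, e_{k+1})`
        W2.map g.toLinearMap = stdSpan m ({i : Fin m | (i : ℕ) < k - 1} ∪ {(⟨k, by omega⟩ : Fin m)}))
      ↔ Module.finrank ℝ ↥(W1 ⊓ W2) = k - 1 := by
  constructor
  · rintro ⟨g, h1, h2⟩
    have hmap : (W1 ⊓ W2).map g.toLinearMap = W1.map g.toLinearMap ⊓ W2.map g.toLinearMap :=
      Submodule.map_inf _ g.injective
    have hfr : Module.finrank ℝ ↥(W1 ⊓ W2) = Module.finrank ℝ ((W1 ⊓ W2).map g.toLinearMap) :=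
      (LinearEquiv.finrank_map_eq g _).symm
    rw [hfr, hmap, h1, h2]
    have hinf : stdSpan m {i : Fin m | (i : ℕ) < k} ⊓
        stdSpan m ({i : Fin m | (i : ℕ) < k - 1} ∪ {(⟨k, by omega⟩ : Fin m)}) =
        stdSpan m {i : Fin m | (i : ℕ) < k - 1} := by
      ext x
      simp only [Submodule.mem_inf, mem_stdSpan]
      constructor
      · rintro ⟨ha, hb⟩ i hi
        simp only [Set.mem_setOf_eq, not_lt] at hi
        by_cases hik : (i : ℕ) < k
        · apply hb i
          simp only [Set.mem_union, Set.mem_setOf_eq, Set.mem_singleton_iff, Fin.ext_iff]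
          push_neg
          omega
        · exact ha i hik
      · intro h
        refine ⟨fun i hi => h i ?_, fun i hi => h i ?_⟩
        · simp only [Set.mem_setOf_eq, not_lt] at hi ⊢
          omega
        · simp only [Set.mem_union, Set.mem_setOf_eq, Set.mem_singleton_iff] at hi
          push_neg at hi
          simpa using hi.1
    rw [hinf, finrank_stdSpan m (k-1) (by omega)]
  · intro hinf
    classical
    -- pick v1 ∈ W1 \ W2 and v2 ∈ W2 \ W1
    have hne1 : ¬ W1 ≤ W2 := by
      intro h
      have : W1 ⊓ W2 = W1 := inf_eq_left.mpr h
      rw [this, hW1] at hinf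
      omega
    have hne2 : ¬ W2 ≤ W1 := by
      intro h
      have : W1 ⊓ W2 = W2 := inf_eq_right.mpr h
      rw [this, hW2] at hinf
      omega
    obtain ⟨v1, hv1W1, hv1W2⟩ := SetLike.not_le_iff_exists.mp hne1
    obtain ⟨v2, hv2W2, hv2W1⟩ := SetLike.not_le_iff_exists.mp hne2
    have hv1ne : v1 ≠ 0 := fun h => hv1W2 (h ▸ W2.zero_mem)
    have hv2ne : v2 ≠ 0 := fun h => hv2W1 (h ▸ W1.zero_mem)
    have hv1I : v1 ∉ W1 ⊓ W2 := fun h => hv1W2 h.2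
    have hv2I : v2 ∉ W1 ⊓ W2 := fun h => hv2W1 h.1
    -- basis of the intersection
    set U0 : Submodule ℝ (Fin m → ℝ) := W1 ⊓ W2 with hU0
    let b0 : Module.Basis (Fin (k - 1)) ℝ U0 := (Module.finBasis ℝ U0).reindex (finCongr hinf)
    let u : Fin (k - 1) → (Fin m → ℝ) := fun j => (b0 j : Fin m → ℝ)
    have hu_li : LinearIndependent ℝ u :=
      b0.linearIndependent.map' U0.subtype (Submodule.ker_subtype U0)
    have hu_span : Submodule.span ℝ (Set.range u) = U0 := by
      have : Set.range u = U0.subtype '' Set.range b0 := by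
        rw [← Set.range_comp]; rfl
      rw [this, ← Submodule.map_span, b0.span_eq, Submodule.map_subtype_top]
    -- W1 = U0 ⊔ span v1
    have hsup1 : U0 ⊔ Submodule.span ℝ {v1} = W1 := by
      have hle : U0 ⊔ Submodule.span ℝ {v1} ≤ W1 :=
        sup_le inf_le_left ((Submodule.span_singleton_le_iff_mem v1 W1).mpr hv1W1)
      refine Submodule.eq_of_le_of_finrank_eq hle ?_
      have hdisj : U0 ⊓ Submodule.span ℝ {v1} = ⊥ :=
        disjoint_iff.mp ((Submodule.disjoint_span_singleton' hv1ne).mpr hv1I)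
      have := Submodule.finrank_sup_add_finrank_inf_eq U0 (Submodule.span ℝ {v1})
      rw [hdisj, finrank_bot, hinf, finrank_span_singleton hv1ne] at this
      rw [hW1]
      omega
    have hsup2 : U0 ⊔ Submodule.span ℝ {v2} = W2 := by
      have hle : U0 ⊔ Submodule.span ℝ {v2} ≤ W2 :=
        sup_le inf_le_right ((Submodule.span_singleton_le_iff_mem v2 W2).mpr hv2W2)
      refine Submodule.eq_of_le_of_finrank_eq hle ?_
      have hdisj : U0 ⊓ Submodule.span ℝ {v2} = ⊥ :=
        disjoint_iff.mp ((Submodule.disjoint_span_singleton' hv2ne).mpr hv2I)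
      have := Submodule.finrank_sup_add_finrank_inf_eq U0 (Submodule.span ℝ {v2})
      rw [hdisj, finrank_bot, hinf, finrank_span_singleton hv2ne] at this
      rw [hW2]
      omega
    -- the family t on Fin (k+1)
    let t : Fin (k + 1) → (Fin m → ℝ) := fun j =>
      if h : (j : ℕ) < k - 1 then u ⟨j, h⟩ else if (j : ℕ) = k - 1 then v1 else v2
    have ht_range : Set.range t = Set.range u ∪ {v1} ∪ {v2} := by
      ext x
      constructor
      · rintro ⟨j, rfl⟩
        by_cases h1 : (j : ℕ) < k - 1
        · exact Or.inl (Or.inl ⟨⟨j, h1⟩, by simp [t, h1]⟩)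
        · by_cases h2 : (j : ℕ) = k - 1
          · exact Or.inl (Or.inr (by simp [t, h1, h2]))
          · exact Or.inr (by simp [t, h1, h2])
      · rintro ((⟨j, rfl⟩ | rfl) | rfl)
        · exact ⟨⟨j, by omega⟩, by simp [t, j.2]⟩
        · exact ⟨⟨k - 1, by omega⟩, by simp [t]⟩
        · exact ⟨⟨k, by omega⟩, by simp [t, Nat.lt_irrefl, show ¬ (k < k - 1) by omega,
            show k ≠ k - 1 by omega]⟩
    have ht_span : Submodule.span ℝ (Set.range t) = W1 ⊔ W2 := by
      rw [ht_range, Submodule.span_union, Submodule.span_union, hu_span, ← hsup1, ← hsup2]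
      rw [sup_assoc]
      exact sup_sup_distrib_left U0 _ _
    have hfr_sup : Module.finrank ℝ ↥(W1 ⊔ W2) = k + 1 := by
      have := Submodule.finrank_sup_add_finrank_inf_eq W1 W2
      rw [hW1, hW2, hinf] at this
      omega
    have ht_li : LinearIndependent ℝ t := by
      rw [linearIndependent_iff_card_eq_finrank_span]
      rw [Set.finrank, ht_span, hfr_sup, Fintype.card_fin]
    -- complement
    obtain ⟨U', hcompl⟩ := Submodule.exists_isCompl (W1 ⊔ W2)
    have hfrU' : Module.finrank ℝ U' = m - (k + 1) := by
      have := Submodule.finrank_add_eq_of_isCompl hcompl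
      rw [hfr_sup, Module.finrank_pi, Fintype.card_fin] at this
      omega
    let b1 : Module.Basis (Fin (m - (k + 1))) ℝ U' := (Module.finBasis ℝ U').reindex (finCongr hfrU')
    let d : Fin (m - (k + 1)) → (Fin m → ℝ) := fun j => (b1 j : Fin m → ℝ)
    have hd_li : LinearIndependent ℝ d :=
      b1.linearIndependent.map' U'.subtype (Submodule.ker_subtype U')
    have hd_span : Submodule.span ℝ (Set.range d) = U' := by
      have : Set.range d = U'.subtype '' Set.range b1 := by
        rw [← Set.range_comp]; rfl
      rw [this, ← Submodule.map_span, b1.span_eq, Submodule.map_subtype_top]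
    have hs_li : LinearIndependent ℝ (Sum.elim t d) := by
      refine ht_li.sum_type hd_li ?_
      rw [ht_span, hd_span]
      exact hcompl.disjoint
    have hm : m = (k + 1) + (m - (k + 1)) := by omega
    let e : Fin m ≃ (Fin (k + 1) ⊕ Fin (m - (k + 1))) := (finCongr hm).trans finSumFinEquiv.symm
    let w : Fin m → (Fin m → ℝ) := Sum.elim t d ∘ e
    have hw_li : LinearIndependent ℝ w := hs_li.comp e e.injective
    have hw_range : Set.range w = Set.range t ∪ Set.range d := by
      rw [show w = Sum.elim t d ∘ e from rfl, Set.range_comp, Set.range_eq_univ.mpr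
        e.surjective, Set.image_univ, Set.Sum.elim_range]
    have hw_span : ⊤ ≤ Submodule.span ℝ (Set.range w) := by
      rw [hw_range, Submodule.span_union, ht_span, hd_span, hcompl.sup_eq_top]
    let b : Module.Basis (Fin m) ℝ (Fin m → ℝ) := Module.Basis.mk hw_li hw_span
    let g : (Fin m → ℝ) ≃ₗ[ℝ] (Fin m → ℝ) := b.equiv (Pi.basisFun ℝ (Fin m)) (Equiv.refl _)
    have hg : ∀ i : Fin m, g (w i) = Pi.single i 1 := by
      intro i
      have : g (b i) = Pi.basisFun ℝ (Fin m) i := b.equiv_apply i _ _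
      rw [Module.Basis.mk_apply] at this
      rw [this, Pi.basisFun_apply]
    -- computing w on small indices
    have hw_eq : ∀ (i : Fin m) (h : (i : ℕ) < k + 1), w i = t ⟨i, h⟩ := by
      intro i h
      show Sum.elim t d (finSumFinEquiv.symm (Fin.cast hm i)) = t ⟨i, h⟩
      have : Fin.cast hm i = Fin.castAdd (m - (k + 1)) ⟨(i : ℕ), h⟩ := by
        simp [Fin.ext_iff]
      rw [this, finSumFinEquiv_symm_apply_castAdd]
      rfl
    -- image computations
    have himg1 : w '' {i : Fin m | (i : ℕ) < k} = Set.range u ∪ {v1} := by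
      ext x
      constructor
      · rintro ⟨i, hi, rfl⟩
        simp only [Set.mem_setOf_eq] at hi
        rw [hw_eq i (by omega)]
        by_cases h1 : (i : ℕ) < k - 1
        · exact Or.inl ⟨⟨i, h1⟩, by simp [t, h1]⟩
        · have h2 : (i : ℕ) = k - 1 := by omega
          exact Or.inr (by simp [t, h1, h2])
      · rintro (⟨j, rfl⟩ | rfl)
        · refine ⟨⟨j, by omega⟩, by simp only [Set.mem_setOf_eq]; omega, ?_⟩
          rw [hw_eq _ (show (j : ℕ) < k + 1 by omega)]
          simp [t, show ((j : ℕ) : ℕ) < k - 1 from j.2]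
        · refine ⟨⟨k - 1, by omega⟩, by simp only [Set.mem_setOf_eq]; omega, ?_⟩
          rw [hw_eq _ (show k - 1 < k + 1 by omega)]
          simp [t]
    have himg2 : w '' ({i : Fin m | (i : ℕ) < k - 1} ∪ {(⟨k, by omega⟩ : Fin m)}) =
        Set.range u ∪ {v2} := by
      ext x
      constructor
      · rintro ⟨i, hi, rfl⟩
        rcases hi with hi | hi
        · simp only [Set.mem_setOf_eq] at hi
          rw [hw_eq i (by omega)]
          exact Or.inl ⟨⟨i, hi⟩, by simp [t, hi]⟩
        · rw [Set.mem_singleton_iff] at hi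
          subst hi
          rw [hw_eq _ (show k < k + 1 by omega)]
          refine Or.inr ?_
          simp [t, show ¬ (k < k - 1) by omega, show k ≠ k - 1 by omega]
      · rintro (⟨j, rfl⟩ | rfl)
        · refine ⟨⟨j, by omega⟩, Or.inl (by simp only [Set.mem_setOf_eq]; exact j.2), ?_⟩
          rw [hw_eq _ (show (j : ℕ) < k + 1 by omega)]
          simp [t, show ((j : ℕ) : ℕ) < k - 1 from j.2]
        · refine ⟨⟨k, by omega⟩, Or.inr rfl, ?_⟩
          rw [hw_eq _ (show k < k + 1 by omega)]
          simp [t, show ¬ (k < k - 1) by omega, show k ≠ k - 1 by omega]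
    -- conclude
    refine ⟨g, ?_, ?_⟩
    · have hW1' : W1 = Submodule.span ℝ (w '' {i : Fin m | (i : ℕ) < k}) := by
        rw [himg1, Submodule.span_union, hu_span, hsup1]
      rw [hW1', Submodule.map_span, stdSpan]
      congr 1
      rw [← Set.image_comp]
      exact Set.image_congr fun i _ => hg i
    · have hW2' : W2 = Submodule.span ℝ
          (w '' ({i : Fin m | (i : ℕ) < k - 1} ∪ {(⟨k, by omega⟩ : Fin m)})) := by
        rw [himg2, Submodule.span_union, hu_span, hsup2]
      conv_lhs => rw [hW2']
      rw [Submodule.map_span, stdSpan]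
      congr 1
      rw [← Set.image_comp]
      exact Set.image_congr fun i _ => hg i
end

section
/- Let W be a Lagrangian subspace of ℝ^{2m} with its standard symplectic form Ω. An element g ∈ GL(2m,ℝ) is a Lagrangian symmetry at W (i.e., there exists c ≠ 0 with g w = c w for all w ∈ W and Ω(g x, g y) = −c²·Ω(x,y) for all x,y) if and only if there exist c ≠ 0 and a linear map P : ℝ^{2m} → ℝ^{2m} with P ∘ P = P, range(P) = W, and kernel(P) a Lagrangian subspace, such that g = c·(2P − I). In particular, Lagrangian symmetries exist at every Lagrangian subspace W. -/
/-- The standard symplectic form on `ℝ^{2m}`: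
`Ω(x,y) = Σ_{i=1}^m (x_i y_{m+i} − x_{m+i} y_i)`. -/
def Omega (m : ℕ) (x y : Fin (2 * m) → ℝ) : ℝ :=
  ∑ i : Fin m,
    (x ⟨i.1, by have := i.2; omega⟩ * y ⟨m + i.1, by have := i.2; omega⟩ -
      x ⟨m + i.1, by have := i.2; omega⟩ * y ⟨i.1, by have := i.2; omega⟩)

/-- A subspace of `ℝ^{2m}` is Lagrangian if it has dimension `m` and `Ω` vanishes on it. -/
def IsLagrangian (m : ℕ) (W : Submodule ℝ (Fin (2 * m) → ℝ)) : Prop :=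
  Module.finrank ℝ W = m ∧ ∀ x ∈ W, ∀ y ∈ W, Omega m x y = 0

namespace Stmt17Aux

variable {m : ℕ}

abbrev V (m : ℕ) := Fin (2 * m) → ℝ

def idx1 (m : ℕ) (i : Fin m) : Fin (2 * m) := ⟨i.1, by have := i.2; omega⟩
def idx2 (m : ℕ) (i : Fin m) : Fin (2 * m) := ⟨m + i.1, by have := i.2; omega⟩

lemma Omega_eq (m : ℕ) (x y : V m) :
    Omega m x y = ∑ i : Fin m, (x (idx1 m i) * y (idx2 m i) - x (idx2 m i) * y (idx1 m i)) := rfl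

/-- Ω as a bilinear form. -/
def B (m : ℕ) : LinearMap.BilinForm ℝ (V m) :=
  LinearMap.mk₂ ℝ (Omega m)
    (by intro x x' y; simp only [Omega_eq, Pi.add_apply]
        rw [← Finset.sum_add_distrib]; apply Finset.sum_congr rfl; intros; ring)
    (by intro a x y; simp only [Omega_eq, Pi.smul_apply, smul_eq_mul, Finset.mul_sum]
        apply Finset.sum_congr rfl; intros; ring)
    (by intro x y y'; simp only [Omega_eq, Pi.add_apply]
        rw [← Finset.sum_add_distrib]; apply Finset.sum_congr rfl; intros; ring)
    (by intro a x y; simp only [Omega_eq, Pi.smul_apply, smul_eq_mul, Finset.mul_sum]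
        apply Finset.sum_congr rfl; intros; ring)

@[simp] lemma B_apply (x y : V m) : B m x y = Omega m x y := rfl

lemma B_alt : (B m).IsAlt := by
  intro x; simp only [B_apply, Omega_eq]
  apply Finset.sum_eq_zero; intros; ring

lemma B_refl : (B m).IsRefl := B_alt.isRefl

def dl (j : Fin (2 * m)) : V m := fun k => if k = j then 1 else 0

lemma Omega_single2 (x : V m) (i : Fin m) :
    Omega m x (dl (idx2 m i)) = x (idx1 m i) := by
  rw [Omega_eq, Finset.sum_eq_single i]
  · have h2 : idx1 m i ≠ idx2 m i := by have := i.2; simp [idx1, idx2, Fin.ext_iff]; omega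
    simp [dl, h2]
  · intro j _ hj
    have h1 : idx2 m j ≠ idx2 m i := by
      simp [idx2, Fin.ext_iff]; exact fun h => hj (Fin.ext h)
    have h2 : idx1 m j ≠ idx2 m i := by
      simp [idx1, idx2, Fin.ext_iff]; have := j.2; omega
    simp [dl, h1, h2]
  · simp

lemma Omega_single1 (x : V m) (i : Fin m) :
    Omega m x (dl (idx1 m i)) = -x (idx2 m i) := by
  rw [Omega_eq, Finset.sum_eq_single i]
  · have h2 : idx2 m i ≠ idx1 m i := by have := i.2; simp [idx1, idx2, Fin.ext_iff]; omega
    simp [dl, h2]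
  · intro j _ hj
    have h1 : idx2 m j ≠ idx1 m i := by
      simp [idx1, idx2, Fin.ext_iff]; have := i.2; omega
    have h2 : idx1 m j ≠ idx1 m i := by
      simp [idx1, Fin.ext_iff]; exact fun h => hj (Fin.ext h)
    simp [dl, h1, h2]
  · simp

/-- every index is idx1 or idx2 -/
lemma idx_cases (j : Fin (2 * m)) : (∃ i, j = idx1 m i) ∨ (∃ i, j = idx2 m i) := by
  by_cases h : j.1 < m
  · exact Or.inl ⟨⟨j.1, h⟩, Fin.ext rfl⟩
  · exact Or.inr ⟨⟨j.1 - m, by have := j.2; omega⟩, by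
      simp [idx2, Fin.ext_iff]; omega⟩

lemma B_nondegenerate : (B m).Nondegenerate := by
  apply (LinearMap.IsRefl.nondegenerate_iff_separatingLeft B_refl).mpr
  intro x hx
  funext j
  rcases idx_cases j with ⟨i, rfl⟩ | ⟨i, rfl⟩
  · have := hx (dl (idx2 m i))
    rw [B_apply, Omega_single2] at this
    simpa using this
  · have := hx (dl (idx1 m i))
    rw [B_apply, Omega_single1] at this
    simpa using this

lemma finrank_V : Module.finrank ℝ (V m) = 2 * m := by simp

/-- a Lagrangian subspace equals its own symplectic orthogonal -/
lemma lagrangian_orthogonal_eq {W : Submodule ℝ (V m)} (hW : IsLagrangian m W) :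
    (B m).orthogonal W = W := by
  symm
  apply Submodule.eq_of_le_of_finrank_le
  · intro w hw
    rw [LinearMap.BilinForm.mem_orthogonal_iff]
    intro n hn
    exact hW.2 n hn w hw
  · rw [LinearMap.BilinForm.finrank_orthogonal B_nondegenerate W, finrank_V, hW.1]
    omega

/-- The complex structure `J`. -/
def Jl (m : ℕ) : V m →ₗ[ℝ] V m where
  toFun x := fun j =>
    if h : j.1 < m then -x ⟨m + j.1, by have := j.2; omega⟩
    else x ⟨j.1 - m, by have := j.2; omega⟩
  map_add' x y := by funext j; by_cases h : (j : ℕ) < m <;> simp [h] <;> ring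
  map_smul' a x := by funext j; by_cases h : (j : ℕ) < m <;> simp [h] <;> ring

lemma Jl_idx1 (x : V m) (i : Fin m) : Jl m x (idx1 m i) = -x (idx2 m i) := by
  have h : (idx1 m i).1 < m := i.2
  simp only [Jl, LinearMap.coe_mk, AddHom.coe_mk, idx1, idx2]
  rw [dif_pos i.2]

lemma Jl_idx2 (x : V m) (i : Fin m) : Jl m x (idx2 m i) = x (idx1 m i) := by
  have h : ¬ (idx2 m i).1 < m := by simp [idx2]
  simp only [Jl, LinearMap.coe_mk, AddHom.coe_mk, idx2, idx1]
  rw [dif_neg (by omega : ¬ m + (i : ℕ) < m)]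
  congr 1
  exact Fin.ext (by simp)

lemma Omega_J (x y : V m) : Omega m (Jl m x) (Jl m y) = Omega m x y := by
  simp only [Omega_eq, Jl_idx1, Jl_idx2]
  apply Finset.sum_congr rfl; intros; ring

lemma Omega_self_J (x : V m) (h : Omega m x (Jl m x) = 0) : x = 0 := by
  have hsum : ∑ i : Fin m, (x (idx1 m i) ^ 2 + x (idx2 m i) ^ 2) = 0 := by
    rw [← h, Omega_eq]
    apply Finset.sum_congr rfl; intros i _
    rw [Jl_idx1, Jl_idx2]; ring
  have hz : ∀ i ∈ Finset.univ, (x (idx1 m i) ^ 2 + x (idx2 m i) ^ 2 : ℝ) = 0 := by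
    intro i _
    have := Finset.sum_eq_zero_iff_of_nonneg (fun i _ => by positivity) |>.mp hsum
    exact this i (Finset.mem_univ i)
  funext j
  rcases idx_cases j with ⟨i, rfl⟩ | ⟨i, rfl⟩ <;>
  · have := hz i (Finset.mem_univ i)
    have h1 : x (idx1 m i) = 0 ∧ x (idx2 m i) = 0 := by
      constructor <;> nlinarith [sq_nonneg (x (idx1 m i)), sq_nonneg (x (idx2 m i))]
    simp [h1.1, h1.2, Pi.zero_apply]

lemma Jl_Jl (x : V m) : Jl m (Jl m x) = -x := by
  funext j
  rcases idx_cases j with ⟨i, rfl⟩ | ⟨i, rfl⟩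
  · rw [Jl_idx1, Jl_idx2]; simp
  · rw [Jl_idx2, Jl_idx1]; simp

lemma Jl_inj : Function.Injective (Jl m) := by
  intro x y h
  have : Jl m (Jl m x) = Jl m (Jl m y) := by rw [h]
  rw [Jl_Jl, Jl_Jl] at this
  simpa using this

/-- Existence of a Lagrangian complement: `J W` works. -/
lemma exists_lagrangian_compl {W : Submodule ℝ (V m)} (hW : IsLagrangian m W) :
    ∃ W' : Submodule ℝ (V m), IsLagrangian m W' ∧ IsCompl W W' := by
  have hmap : Module.finrank ℝ (W.map (Jl m)) = m :=
    (LinearEquiv.finrank_eq (Submodule.equivMapOfInjective (Jl m) Jl_inj W)).symm.trans hW.1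
  have hd : Disjoint W (W.map (Jl m)) := by
    rw [Submodule.disjoint_def]
    rintro x hx ⟨a, ha, rfl⟩
    have : Omega m a (Jl m a) = 0 := hW.2 a ha _ hx
    rw [Omega_self_J a this]; simp
  refine ⟨W.map (Jl m), ⟨hmap, ?_⟩, hd, ?_⟩
  · rintro x ⟨a, ha, rfl⟩ y ⟨b, hb, rfl⟩
    rw [Omega_J]; exact hW.2 a ha b hb
  · rw [codisjoint_iff]
    apply Submodule.eq_top_of_finrank_eq
    have h1 := Submodule.finrank_sup_add_finrank_inf_eq W (W.map (Jl m))
    rw [disjoint_iff.mp hd, finrank_bot, add_zero, hW.1, hmap] at h1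
    rw [finrank_V, h1]; omega

lemma Omega_expand (c : ℝ) (p k q l : V m) :
    Omega m (c • (p - k)) (c • (q - l)) =
      c ^ 2 * (Omega m p q - Omega m p l - Omega m k q + Omega m k l) := by
  simp only [Omega_eq, Pi.smul_apply, Pi.sub_apply, smul_eq_mul, Finset.mul_sum,
    ← Finset.sum_sub_distrib, ← Finset.sum_add_distrib]
  apply Finset.sum_congr rfl; intros; ring

lemma Omega_decomp (p k q l : V m) :
    Omega m (p + k) (q + l) =
      Omega m p q + Omega m p l + Omega m k q + Omega m k l := by
  simp only [Omega_eq, Pi.add_apply, ← Finset.sum_add_distrib]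
  apply Finset.sum_congr rfl; intros; ring

lemma Omega_add_right (x y y' : V m) :
    Omega m x (y + y') = Omega m x y + Omega m x y' := map_add (B m x) y y'

lemma Omega_smul_right (a : ℝ) (x y : V m) :
    Omega m x (a • y) = a * Omega m x y := map_smul (B m x) a y

lemma Omega_smul_left (a : ℝ) (x y : V m) :
    Omega m (a • x) y = a * Omega m x y := by
  simp only [Omega_eq, Pi.smul_apply, smul_eq_mul, Finset.mul_sum]
  apply Finset.sum_congr rfl; intros; ring

/-- Backward direction. -/
lemma mpr_dir {W : Submodule ℝ (V m)} (hW : IsLagrangian m W)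
    (g : V m ≃ₗ[ℝ] V m) (c : ℝ) (P : V m →ₗ[ℝ] V m)
    (hc : c ≠ 0) (hP2 : P ∘ₗ P = P) (hrange : LinearMap.range P = W)
    (hker : IsLagrangian m (LinearMap.ker P))
    (hg : g.toLinearMap = c • ((2 : ℝ) • P - LinearMap.id)) :
    ∃ c : ℝ, c ≠ 0 ∧ (∀ w ∈ W, g w = c • w) ∧
      ∀ x y : V m, Omega m (g x) (g y) = -c ^ 2 * Omega m x y := by
  have hPw : ∀ w ∈ W, P w = w := by
    intro w hw
    rw [← hrange] at hw
    obtain ⟨x, rfl⟩ := hw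
    exact congrFun (congrArg (fun f => f.toFun) hP2) x
  have hgapp : ∀ x, g x = c • ((2 : ℝ) • P x - x) := by
    intro x
    have := congrFun (congrArg (fun f => f.toFun) hg) x
    simpa using this
  refine ⟨c, hc, ?_, ?_⟩
  · intro w hw
    rw [hgapp w, hPw w hw]
    congr 1
    rw [two_smul]; abel
  · intro x y
    have hx : x = P x + (x - P x) := by abel
    have hy : y = P y + (y - P y) := by abel
    have hxk : x - P x ∈ LinearMap.ker P := by
      rw [LinearMap.mem_ker, map_sub]
      have : P (P x) = P x := congrFun (congrArg (fun f => f.toFun) hP2) x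
      rw [this, sub_self]
    have hyk : y - P y ∈ LinearMap.ker P := by
      rw [LinearMap.mem_ker, map_sub]
      have : P (P y) = P y := congrFun (congrArg (fun f => f.toFun) hP2) y
      rw [this, sub_self]
    have hxp : P x ∈ W := hrange ▸ LinearMap.mem_range_self P x
    have hyp : P y ∈ W := hrange ▸ LinearMap.mem_range_self P y
    have hgx : g x = c • (P x - (x - P x)) := by
      rw [hgapp x]; congr 1; rw [two_smul]; abel
    have hgy : g y = c • (P y - (y - P y)) := by
      rw [hgapp y]; congr 1; rw [two_smul]; abel
    rw [hgx, hgy, Omega_expand]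
    have h1 : Omega m (P x) (P y) = 0 := hW.2 _ hxp _ hyp
    have h2 : Omega m (x - P x) (y - P y) = 0 := hker.2 _ hxk _ hyk
    have h3 : Omega m x y = Omega m (P x) (y - P y) + Omega m (x - P x) (P y) := by
      conv_lhs => rw [hx, hy]
      rw [Omega_decomp, h1, h2]; ring
    rw [h1, h2, h3]; ring

/-- Forward direction. -/
lemma mp_dir {W : Submodule ℝ (V m)} (hW : IsLagrangian m W)
    (g : V m ≃ₗ[ℝ] V m) (c : ℝ) (hc : c ≠ 0)
    (hgW : ∀ w ∈ W, g w = c • w)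
    (hgO : ∀ x y : V m, Omega m (g x) (g y) = -c ^ 2 * Omega m x y) :
    ∃ (c : ℝ) (P : V m →ₗ[ℝ] V m),
      c ≠ 0 ∧ P ∘ₗ P = P ∧ LinearMap.range P = W ∧
      IsLagrangian m (LinearMap.ker P) ∧
      g.toLinearMap = c • ((2 : ℝ) • P - LinearMap.id) := by
  -- key membership fact
  have hmem : ∀ y : V m, g y + c • y ∈ W := by
    intro y
    rw [← lagrangian_orthogonal_eq hW]
    rw [LinearMap.BilinForm.mem_orthogonal_iff]
    intro w hw
    show Omega m w (g y + c • y) = 0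
    have h1 : Omega m (g w) (g y) = -c ^ 2 * Omega m w y := hgO w y
    rw [hgW w hw, Omega_smul_left] at h1
    have h2 : Omega m w (g y) = -c * Omega m w y :=
      mul_left_cancel₀ hc (by rw [h1]; ring)
    rw [Omega_add_right, Omega_smul_right, h2]; ring
  -- define the projection
  set P : V m →ₗ[ℝ] V m := (1 / (2 * c)) • g.toLinearMap + (1 / 2 : ℝ) • LinearMap.id with hP
  have hPapp : ∀ x, P x = (1 / (2 * c)) • g x + (1 / 2 : ℝ) • x := fun x => rfl
  have hPmem : ∀ x, P x ∈ W := by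
    intro x
    have : P x = (1 / (2 * c)) • (g x + c • x) := by
      rw [hPapp, smul_add, smul_smul]
      congr 2
      field_simp
    rw [this]
    exact W.smul_mem _ (hmem x)
  have hPw : ∀ w ∈ W, P w = w := by
    intro w hw
    rw [hPapp, hgW w hw, smul_smul]
    have hs : 1 / (2 * c) * c = 1 / 2 := by field_simp
    rw [hs, ← add_smul]
    norm_num
  have hP2 : P ∘ₗ P = P := by
    apply LinearMap.ext; intro x
    exact hPw (P x) (hPmem x)
  have hrange : LinearMap.range P = W := by
    apply le_antisymm
    · rintro _ ⟨x, rfl⟩; exact hPmem x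
    · intro w hw; exact ⟨w, hPw w hw⟩
  have hkdim : Module.finrank ℝ (LinearMap.ker P) = m := by
    have := LinearMap.finrank_range_add_finrank_ker P
    rw [hrange, hW.1, finrank_V] at this
    omega
  have hneg : ∀ u ∈ LinearMap.ker P, g u = -c • u := by
    intro u hu
    have h0 : (1 / (2 * c)) • g u + (1 / 2 : ℝ) • u = 0 := hu
    have := congrArg (fun z => (2 * c) • z) h0
    simp only [smul_add, smul_smul, smul_zero] at this
    have e1 : 2 * c * (1 / (2 * c)) = 1 := by field_simp
    have e2 : 2 * c * (1 / 2) = c := by ring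
    rw [e1, e2, one_smul] at this
    have : g u = -(c • u) := by
      have := eq_neg_of_add_eq_zero_left this
      exact this
    rw [this, neg_smul]
  have hkerL : IsLagrangian m (LinearMap.ker P) := by
    refine ⟨hkdim, ?_⟩
    intro u hu v hv
    have h1 := hgO u v
    rw [hneg u hu, hneg v hv, Omega_smul_left, Omega_smul_right] at h1
    have : (2 * c ^ 2) * Omega m u v = 0 := by nlinarith [h1]
    have hc2 : (2 : ℝ) * c ^ 2 ≠ 0 := by positivity
    exact (mul_eq_zero.mp this).resolve_left hc2
  refine ⟨c, P, hc, hP2, hrange, hkerL, ?_⟩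
  apply LinearMap.ext; intro x
  simp only [LinearMap.smul_apply, LinearMap.sub_apply, LinearMap.id_apply,
    LinearEquiv.coe_coe]
  have key : (2 : ℝ) • P x - x = (2 * (1 / (2 * c))) • g x := by
    rw [hPapp, smul_add, smul_smul, smul_smul]
    have h12 : (2 : ℝ) * (1 / 2) = 1 := by norm_num
    rw [h12, one_smul]; abel
  rw [key, smul_smul]
  have : c * (2 * (1 / (2 * c))) = 1 := by field_simp
  rw [this, one_smul]

end Stmt17Aux

/-- A *Lagrangian symmetry* at a Lagrangian subspace `W ⊆ ℝ^{2m}`: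
an invertible linear map `g` such that for some `c ≠ 0`, `g w = c • w` for all `w ∈ W`
and `Ω(g x, g y) = −c² Ω(x, y)` for all `x, y`. -/
def LagSym (m : ℕ) (W : Submodule ℝ (Fin (2 * m) → ℝ))
    (g : (Fin (2 * m) → ℝ) ≃ₗ[ℝ] (Fin (2 * m) → ℝ)) : Prop :=
  ∃ c : ℝ, c ≠ 0 ∧ (∀ w ∈ W, g w = c • w) ∧
    ∀ x y : Fin (2 * m) → ℝ, Omega m (g x) (g y) = -c ^ 2 * Omega m x y

theorem stmt17 (m : ℕ)
    (W : Submodule ℝ (Fin (2 * m) → ℝ)) (hW : IsLagrangian m W) :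
    (∀ g : (Fin (2 * m) → ℝ) ≃ₗ[ℝ] (Fin (2 * m) → ℝ),
        LagSym m W g ↔
          ∃ (c : ℝ) (P : (Fin (2 * m) → ℝ) →ₗ[ℝ] (Fin (2 * m) → ℝ)),
            c ≠ 0 ∧ P ∘ₗ P = P ∧ LinearMap.range P = W ∧
            IsLagrangian m (LinearMap.ker P) ∧
            g.toLinearMap = c • ((2 : ℝ) • P - LinearMap.id)) ∧
    ∃ g : (Fin (2 * m) → ℝ) ≃ₗ[ℝ] (Fin (2 * m) → ℝ), LagSym m W g := by

  have main : ∀ g : (Fin (2 * m) → ℝ) ≃ₗ[ℝ] (Fin (2 * m) → ℝ),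
      LagSym m W g ↔
        ∃ (c : ℝ) (P : (Fin (2 * m) → ℝ) →ₗ[ℝ] (Fin (2 * m) → ℝ)),
          c ≠ 0 ∧ P ∘ₗ P = P ∧ LinearMap.range P = W ∧
          IsLagrangian m (LinearMap.ker P) ∧
          g.toLinearMap = c • ((2 : ℝ) • P - LinearMap.id) := by
    intro g
    constructor
    · rintro ⟨c, hc, hgW, hgO⟩
      exact Stmt17Aux.mp_dir hW g c hc hgW hgO
    · rintro ⟨c, P, hc, hP2, hr, hk, hg⟩
      exact Stmt17Aux.mpr_dir hW g c P hc hP2 hr hk hg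
  refine ⟨main, ?_⟩
  obtain ⟨W', hW', hcompl⟩ := Stmt17Aux.exists_lagrangian_compl hW
  set P : (Fin (2 * m) → ℝ) →ₗ[ℝ] (Fin (2 * m) → ℝ) :=
    W.subtype ∘ₗ Submodule.projectionOnto W W' hcompl with hPdef
  have hPmem : ∀ x, P x ∈ W := fun x => (Submodule.projectionOnto W W' hcompl x).2
  have hPw : ∀ w ∈ W, P w = w := by
    intro w hw
    have := Submodule.projectionOnto_apply_left hcompl ⟨w, hw⟩
    show (W.subtype) (Submodule.projectionOnto W W' hcompl w) = w
    rw [show Submodule.projectionOnto W W' hcompl w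
        = Submodule.projectionOnto W W' hcompl (⟨w, hw⟩ : W) from rfl, this]
    rfl
  have hP2 : P ∘ₗ P = P := by
    apply LinearMap.ext; intro x
    exact hPw (P x) (hPmem x)
  have hrange : LinearMap.range P = W := by
    apply le_antisymm
    · rintro _ ⟨x, rfl⟩; exact hPmem x
    · intro w hw; exact ⟨w, hPw w hw⟩
  have hker : LinearMap.ker P = W' := by
    apply Submodule.ext; intro x
    rw [LinearMap.mem_ker]
    constructor
    · intro h
      have : Submodule.projectionOnto W W' hcompl x = 0 := by
        apply Subtype.ext
        exact h
      exact (Submodule.projectionOnto_apply_eq_zero_iff hcompl).mp this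
    · intro h
      show W.subtype (Submodule.projectionOnto W W' hcompl x) = 0
      rw [Submodule.projectionOnto_apply_of_mem_right hcompl h]
      rfl
  have hkerL : IsLagrangian m (LinearMap.ker P) := hker ▸ hW'
  set Q : (Fin (2 * m) → ℝ) →ₗ[ℝ] (Fin (2 * m) → ℝ) :=
    (2 : ℝ) • P - LinearMap.id with hQdef
  have hQapp : ∀ x, Q x = (2 : ℝ) • P x - x := fun x => rfl
  have hQQ : Q ∘ₗ Q = LinearMap.id := by
    apply LinearMap.ext; intro x
    show Q (Q x) = x
    have hPQ : P (Q x) = P x := by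
      rw [hQapp, map_sub, map_smul, hPw (P x) (hPmem x)]
      rw [two_smul]; abel
    rw [hQapp (Q x), hPQ, hQapp x, two_smul]; abel
  refine ⟨LinearEquiv.ofLinear Q Q hQQ hQQ, (main _).mpr ⟨1, P, one_ne_zero, hP2, hrange, hkerL, ?_⟩⟩
  rw [one_smul]
  rfl
end
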